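/- Let M = [[a, b], [-c, -d]] be a mixed invertible 2 × 2 integer matrix with a, b, c, d > 0, and suppose ad > bc. Then every bounded M-subgraph of ℕ² contains exactly one point of the rectangle R = {(s,t) ∈ ℕ² : s < b and t < c}. -/

import Mathlib

/-- Adjacency in the graph `Γ(M)` on `ℕ²` for `M = [[a,b],[-c,-d]]`. -/
def edge2 (a b c d : ℕ) (u v : ℕ × ℕ) : Prop :=
  (u.1 = v.1 + a ∧ v.2 = u.2 + c) ∨ (v.1 = u.1 + a ∧ u.2 = v.2 + c) ∨
  (u.1 = v.1 + b ∧ v.2 = u.2 + d) ∨ (v.1 = u.1 + b ∧ u.2 = v.2 + d)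

/-- The `M`-subgraph (connected component of `Γ(M)`) containing `u`. -/
def Mcomp (a b c d : ℕ) (u : ℕ × ℕ) : Set (ℕ × ℕ) :=
  {v | Relation.ReflTransGen (edge2 a b c d) u v}

lemma edge2_symm (a b c d : ℕ) : Symmetric (edge2 a b c d) := by
  intro u v h
  unfold edge2 at *
  tauto

/-- Key invariant: any point reachable from a corner `p` (with `p.1 < b`, `p.2 < c`)
has both linear functionals `c*s+a*t` and `d*s+b*t` at most their values at `p`,
with differences nonnegative multiples of `a*d - b*c`. -/
lemma key_invariant (a b c d : ℕ) (hgt : b * c < a * d)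
    (p : ℕ × ℕ) (hp1 : p.1 < b) (hp2 : p.2 < c)
    {q : ℕ × ℕ} (h : Relation.ReflTransGen (edge2 a b c d) p q) :
    ∃ i j : ℤ, 0 ≤ i ∧ 0 ≤ j ∧
      (c * p.1 + a * p.2 : ℤ) = c * q.1 + a * q.2 + i * ((a:ℤ) * d - b * c) ∧
      (d * p.1 + b * p.2 : ℤ) = d * q.1 + b * q.2 + j * ((a:ℤ) * d - b * c) := by
  have hD : (0:ℤ) < (a:ℤ) * d - (b:ℤ) * c := by
    have : ((b * c : ℕ) : ℤ) < ((a * d : ℕ) : ℤ) := by exact_mod_cast hgt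
    push_cast at this; linarith
  induction h with
  | refl => exact ⟨0, 0, le_refl _, le_refl _, by ring, by ring⟩
  | @tail q r hpq e ih =>
    obtain ⟨i, j, hi, hj, hX, hY⟩ := ih
    rcases e with ⟨h1, h2⟩ | ⟨h1, h2⟩ | ⟨h1, h2⟩ | ⟨h1, h2⟩
    · -- q.1 = r.1 + a, r.2 = q.2 + c : move (-a, +c), y decreases by D
      have h1' : (q.1 : ℤ) = (r.1 : ℤ) + a := by exact_mod_cast h1
      have h2' : (r.2 : ℤ) = (q.2 : ℤ) + c := by exact_mod_cast h2
      exact ⟨i, j + 1, hi, by omega,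
        by linear_combination hX + (c:ℤ) * h1' - (a:ℤ) * h2',
        by linear_combination hY + (d:ℤ) * h1' - (b:ℤ) * h2'⟩
    · -- r.1 = q.1 + a, q.2 = r.2 + c : move (+a, -c), y increases by D
      have h1' : (r.1 : ℤ) = (q.1 : ℤ) + a := by exact_mod_cast h1
      have h2' : (q.2 : ℤ) = (r.2 : ℤ) + c := by exact_mod_cast h2
      rcases eq_or_lt_of_le hj with hj0 | hj1
      · exfalso
        have hkey : ((a:ℤ) * d - b * c) * p.2
            = ((a:ℤ) * d - b * c) * q.2 + (d * i) * ((a:ℤ) * d - b * c) := by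
          linear_combination (d:ℤ) * hX - (c:ℤ) * hY
            + ((c:ℤ) * ((a:ℤ) * d - b * c)) * hj0
        have hp2' : ((p.2 : ℤ)) = (q.2 : ℤ) + d * i := by
          have := mul_left_cancel₀ (ne_of_gt hD)
            (hkey.trans (by ring : ((a:ℤ) * d - b * c) * q.2 + (d * i) * ((a:ℤ) * d - b * c)
              = ((a:ℤ) * d - b * c) * ((q.2 : ℤ) + d * i)))
          exact this
        have hdi : (0:ℤ) ≤ (d:ℤ) * i := mul_nonneg (by positivity) hi
        have hqc : (c:ℤ) ≤ (q.2 : ℤ) := by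
          have hr2 : (0:ℤ) ≤ (r.2 : ℤ) := by positivity
          linarith [h2']
        have hpc : ((p.2 : ℤ)) < (c:ℤ) := by exact_mod_cast hp2
        linarith
      · exact ⟨i, j - 1, hi, by omega,
          by linear_combination hX - (c:ℤ) * h1' + (a:ℤ) * h2',
          by linear_combination hY - (d:ℤ) * h1' + (b:ℤ) * h2'⟩
    · -- q.1 = r.1 + b, r.2 = q.2 + d : move (-b, +d), x increases by D
      have h1' : (q.1 : ℤ) = (r.1 : ℤ) + b := by exact_mod_cast h1
      have h2' : (r.2 : ℤ) = (q.2 : ℤ) + d := by exact_mod_cast h2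
      rcases eq_or_lt_of_le hi with hi0 | hi1
      · exfalso
        have hkey : ((a:ℤ) * d - b * c) * p.1
            = ((a:ℤ) * d - b * c) * q.1 + (a * j) * ((a:ℤ) * d - b * c) := by
          linear_combination (a:ℤ) * hY - (b:ℤ) * hX
            + ((b:ℤ) * ((a:ℤ) * d - b * c)) * hi0
        have hp1' : ((p.1 : ℤ)) = (q.1 : ℤ) + a * j := by
          exact mul_left_cancel₀ (ne_of_gt hD)
            (hkey.trans (by ring))
        have haj : (0:ℤ) ≤ (a:ℤ) * j := mul_nonneg (by positivity) hj
        have hqb : (b:ℤ) ≤ (q.1 : ℤ) := by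
          have hr1 : (0:ℤ) ≤ (r.1 : ℤ) := by positivity
          linarith [h1']
        have hpb : ((p.1 : ℤ)) < (b:ℤ) := by exact_mod_cast hp1
        linarith
      · exact ⟨i - 1, j, by omega, hj,
          by linear_combination hX + (c:ℤ) * h1' - (a:ℤ) * h2',
          by linear_combination hY + (d:ℤ) * h1' - (b:ℤ) * h2'⟩
    · -- r.1 = q.1 + b, q.2 = r.2 + d : move (+b, -d), x decreases by D
      have h1' : (r.1 : ℤ) = (q.1 : ℤ) + b := by exact_mod_cast h1
      have h2' : (q.2 : ℤ) = (r.2 : ℤ) + d := by exact_mod_cast h2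
      exact ⟨i + 1, j, by omega, hj,
        by linear_combination hX - (c:ℤ) * h1' + (a:ℤ) * h2',
        by linear_combination hY - (d:ℤ) * h1' + (b:ℤ) * h2'⟩

/-- If `ad > bc`, every bounded `M`-subgraph of `ℕ²` contains exactly one
point of the rectangle `R = {(s,t) : s < b, t < c}`. -/
theorem bounded_M_subgraph_meets_rectangle (a b c d : ℕ)
    (ha : 0 < a) (hb : 0 < b) (hc : 0 < c) (hd : 0 < d)
    (hgt : b * c < a * d) :
    ∀ u : ℕ × ℕ, (Mcomp a b c d u).Finite →
      ∃! p : ℕ × ℕ, p ∈ Mcomp a b c d u ∧ p.1 < b ∧ p.2 < c := by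
  intro u hfin
  have hne : (Mcomp a b c d u).Nonempty := ⟨u, Relation.ReflTransGen.refl⟩
  obtain ⟨p, hp, hmax⟩ := Set.Finite.exists_maximalFor
    (fun v : ℕ × ℕ => (2 * c + d) * v.1 + (2 * a + b) * v.2) _ hfin hne
  -- p.1 < b
  have hp1 : p.1 < b := by
    by_contra hge
    push_neg at hge
    obtain ⟨k, hk⟩ : ∃ k, p.1 = k + b := ⟨p.1 - b, by omega⟩
    have he : edge2 a b c d p (k, p.2 + d) := by
      right; right; left
      exact ⟨by simpa using hk, rfl⟩
    have hwmem : (k, p.2 + d) ∈ Mcomp a b c d u := Relation.ReflTransGen.tail hp he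
    have hle : (2 * c + d) * p.1 + (2 * a + b) * p.2
        ≤ (2 * c + d) * k + (2 * a + b) * (p.2 + d) := by
      nlinarith [hgt]
    have := hmax hwmem hle
    simp only at this
    nlinarith [hgt, this]
  -- p.2 < c
  have hp2 : p.2 < c := by
    by_contra hge
    push_neg at hge
    obtain ⟨m, hm⟩ : ∃ m, p.2 = m + c := ⟨p.2 - c, by omega⟩
    have he : edge2 a b c d p (p.1 + a, m) := by
      right; left
      exact ⟨rfl, by simpa using hm⟩
    have hwmem : (p.1 + a, m) ∈ Mcomp a b c d u := Relation.ReflTransGen.tail hp he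
    have hle : (2 * c + d) * p.1 + (2 * a + b) * p.2
        ≤ (2 * c + d) * (p.1 + a) + (2 * a + b) * m := by
      nlinarith [hgt]
    have := hmax hwmem hle
    simp only at this
    nlinarith [hgt, this]
  refine ⟨p, ⟨hp, hp1, hp2⟩, ?_⟩
  rintro q ⟨hq, hq1, hq2⟩
  have hsym : ∀ {x y}, Relation.ReflTransGen (edge2 a b c d) x y → Relation.ReflTransGen (edge2 a b c d) y x :=
    fun h => (@Relation.ReflTransGen.stdSymm _ _ ⟨fun x y h => edge2_symm a b c d h⟩).symm _ _ h
  have hpq : Relation.ReflTransGen (edge2 a b c d) p q := (hsym hp).trans hq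
  have hqp : Relation.ReflTransGen (edge2 a b c d) q p := (hsym hq).trans hp
  obtain ⟨i, j, hi, hj, hX1, hY1⟩ := key_invariant a b c d hgt p hp1 hp2 hpq
  obtain ⟨i', j', hi', hj', hX2, hY2⟩ := key_invariant a b c d hgt q hq1 hq2 hqp
  have hD : (0:ℤ) < (a:ℤ) * d - (b:ℤ) * c := by
    have : ((b * c : ℕ) : ℤ) < ((a * d : ℕ) : ℤ) := by exact_mod_cast hgt
    push_cast at this; linarith
  have hii : (i + i') * ((a:ℤ) * d - b * c) = 0 := by
    linear_combination -hX1 - hX2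
  have hjj : (j + j') * ((a:ℤ) * d - b * c) = 0 := by
    linear_combination -hY1 - hY2
  have hi0 : i = 0 := by
    rcases mul_eq_zero.mp hii with h | h
    · omega
    · exact absurd h (ne_of_gt hD)
  have hj0 : j = 0 := by
    rcases mul_eq_zero.mp hjj with h | h
    · omega
    · exact absurd h (ne_of_gt hD)
  have hXeq : (c * p.1 + a * p.2 : ℤ) = c * q.1 + a * q.2 := by
    rw [hi0] at hX1; linarith [hX1]
  have hYeq : (d * p.1 + b * p.2 : ℤ) = d * q.1 + b * q.2 := by
    rw [hj0] at hY1; linarith [hY1]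
  have h1 : ((a:ℤ) * d - b * c) * p.1 = ((a:ℤ) * d - b * c) * q.1 := by
    linear_combination (a:ℤ) * hYeq - (b:ℤ) * hXeq
  have h2 : ((a:ℤ) * d - b * c) * p.2 = ((a:ℤ) * d - b * c) * q.2 := by
    linear_combination (d:ℤ) * hXeq - (c:ℤ) * hYeq
  have h1' : (p.1 : ℤ) = q.1 := mul_left_cancel₀ (ne_of_gt hD) h1
  have h2' : (p.2 : ℤ) = q.2 := mul_left_cancel₀ (ne_of_gt hD) h2
  have e1 : p.1 = q.1 := by exact_mod_cast h1'
  have e2 : p.2 = q.2 := by exact_mod_cast h2'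
  ext
  · exact e1.symm
  · exact e2.symm
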